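/- Let G be a graph and let G' be obtained by adding a new vertex x adjacent to every vertex of G. Then two vertices u, v of G are connected in G if and only if u and v are biconnected in G'. -/

import Mathlib

open SimpleGraph

/-- `G` together with a new apex vertex (`none`) adjacent to every vertex of `G`. -/
def apexGraph {V : Type*} (G : SimpleGraph V) : SimpleGraph (Option V) :=
  SimpleGraph.fromRel (fun a b =>
    match a, b with
    | some a, some b => G.Adj a b
    | some _, none => True
    | none, some _ => True
    | none, none => False)

/-- `u` and `v` are biconnected in `H`: connected, not separated by the removal of any
single vertex other than `u`, `v`, and not separated by the bridge `uv`. -/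
def Biconnected14 {W : Type*} (H : SimpleGraph W) (u v : W) : Prop :=
  H.Reachable u v ∧
    (∀ w, ∀ (hu : u ≠ w) (hv : v ≠ w),
      (H.induce {x | x ≠ w}).Reachable ⟨u, hu⟩ ⟨v, hv⟩) ∧
    ¬ H.IsBridge s(u, v)

lemma apex_adj_some {V : Type*} (G : SimpleGraph V) (a b : V) :
    (apexGraph G).Adj (some a) (some b) ↔ G.Adj a b := by
  simp only [apexGraph, SimpleGraph.fromRel_adj]
  constructor
  · rintro ⟨h, h1 | h1⟩
    · exact h1
    · exact h1.symm
  · intro h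
    exact ⟨fun e => h.ne (Option.some_injective _ e), Or.inl h⟩

lemma apex_adj_none {V : Type*} (G : SimpleGraph V) (a : V) :
    (apexGraph G).Adj none (some a) := by
  simp only [apexGraph, SimpleGraph.fromRel_adj]
  exact ⟨fun e => (by cases e), Or.inl trivial⟩

def apexIso {V : Type*} (G : SimpleGraph V) :
    G ≃g (apexGraph G).induce {x | x ≠ (none : Option V)} where
  toFun a := ⟨some a, Option.some_ne_none a⟩
  invFun p := p.1.get (Option.ne_none_iff_isSome.mp p.2)
  left_inv a := rfl
  right_inv := by
    rintro ⟨p, hp⟩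
    cases p with
    | none => exact absurd rfl hp
    | some a => rfl
  map_rel_iff' := by
    intro a b
    exact (apex_adj_some G a b)

/-- Adding an apex vertex adjacent to all of `G`: two vertices `u`, `v` of `G` are
connected in `G` iff they are biconnected in the augmented graph `G'`. -/
theorem stmt14 {V : Type*} (G : SimpleGraph V) (u v : V) :
    G.Reachable u v ↔ Biconnected14 (apexGraph G) (some u) (some v) := by
  constructor
  · intro h
    refine ⟨?_, ?_, ?_⟩
    · exact ((apex_adj_none G u).reachable).symm.trans (apex_adj_none G v).reachable
    · intro w hu hv
      cases w with
      | none =>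
        exact Reachable.map (apexIso G).toHom h
      | some w =>
        have h1 : ((apexGraph G).induce {x | x ≠ some w}).Adj ⟨some u, hu⟩
            ⟨none, fun e => by cases e⟩ := (apex_adj_none G u).symm
        have h2 : ((apexGraph G).induce {x | x ≠ some w}).Adj
            ⟨none, fun e => by cases e⟩ ⟨some v, hv⟩ := apex_adj_none G v
        exact h1.reachable.trans h2.reachable
    · rw [SimpleGraph.isBridge_iff]
      intro hnr
      apply hnr
      have h1 : ((apexGraph G).deleteEdges {s(some u, some v)}).Adj (some u) none := by
        refine ⟨(apex_adj_none G u).symm, ?_⟩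
        simp [Sym2.eq_iff]
      have h2 : ((apexGraph G).deleteEdges {s(some u, some v)}).Adj none (some v) := by
        refine ⟨apex_adj_none G v, ?_⟩
        simp [Sym2.eq_iff]
      exact h1.reachable.trans h2.reachable
  · rintro ⟨-, h, -⟩
    have := h none (Option.some_ne_none u) (Option.some_ne_none v)
    have := Reachable.map (apexIso G).symm.toHom this
    exact this
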